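/- Let A = ℕ ∩ ⋃_{n∈ℕ} [4^n, (2 - 1/n)·4^n). Then the upper density of A equals 2/3. -/

import Mathlib

open Filter
open scoped Classical

noncomputable def countIn (A : Set ℕ) (N : ℕ) : ℕ :=
  ((Finset.Icc 1 N).filter (fun n => n ∈ A)).card

noncomputable def upperDensity (A : Set ℕ) : ℝ :=
  limsup (fun N => (countIn A N : ℝ) / N) atTop

noncomputable def lowerDensity (A : Set ℕ) : ℝ :=
  liminf (fun N => (countIn A N : ℝ) / N) atTop

def hasDensity (A : Set ℕ) (d : ℝ) : Prop :=
  Tendsto (fun N => (countIn A N : ℝ) / N) atTop (nhds d)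

namespace UD

open Finset

def Aset : Set ℕ := {m : ℕ | ∃ n : ℕ, 1 ≤ n ∧ 4 ^ n ≤ m ∧ (m : ℝ) < (2 - 1 / n) * 4 ^ n}


def T (k : ℕ) : ℕ := ((2*k-1)*4^k - 1)/k

lemma four_pow_pos (k : ℕ) : 0 < 4^k := Nat.pow_pos (by norm_num)

lemma le_four_pow (k : ℕ) : k ≤ 4^k := Nat.le_of_lt (Nat.lt_pow_self (by norm_num : 1 < 4))

lemma T_le (k : ℕ) (hk : 1 ≤ k) : T k + 1 ≤ 2 * 4^k := by
  have h4 : k ≤ 4^k := le_four_pow k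
  have ha : 0 < (2*k-1)*4^k := Nat.mul_pos (by omega) (four_pow_pos k)
  have h : (2*k-1)*4^k - 1 ≤ (2*4^k - 1) * k := by
    have e1 : (2*k-1)*4^k = 2*k*4^k - 4^k := by rw [Nat.sub_mul]; ring_nf
    have e2 : (2*4^k-1)*k = 2*4^k*k - k := by rw [Nat.sub_mul]; ring_nf
    have e3 : 2*k*4^k = 2*4^k*k := by ring
    have h0 : 0 < 4^k := four_pow_pos k
    have h5 : 4^k * 1 ≤ 4^k * k := Nat.mul_le_mul_left _ hk
    have e4 : 2*4^k*k = 2*(4^k*k) := by ring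
    have e5 : 2*k*4^k = 2*(4^k*k) := by ring
    omega
  have := Nat.div_le_div_right (c := k) h
  have h2 : (2*4^k - 1) * k / k = 2*4^k - 1 := Nat.mul_div_cancel _ (by omega)
  unfold T
  omega

lemma T_mul_lb (k : ℕ) (hk : 1 ≤ k) : (2*k-1)*4^k ≤ (T k + 1) * k := by
  have ha : 0 < (2*k-1)*4^k := Nat.mul_pos (by omega) (four_pow_pos k)
  have h : (2*k-1)*4^k - 1 < (T k + 1) * k := by
    rw [← Nat.div_lt_iff_lt_mul (by omega : 0 < k)]
    exact Nat.lt_succ_self _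
  omega

lemma T_ge (k : ℕ) (hk : 2 ≤ k) : 4^k ≤ T k := by
  rw [T, Nat.le_div_iff_mul_le (by omega)]
  have h1 : 1 ≤ 4^k := four_pow_pos k
  have e1 : (2*k-1)*4^k = 2*k*4^k - 4^k := by rw [Nat.sub_mul]; ring_nf
  have e5 : 2*k*4^k = 2*(4^k*k) := by ring
  have h0 : 0 < 4^k := four_pow_pos k
  have h5 : 4^k * 2 ≤ 4^k * k := Nat.mul_le_mul_left _ hk
  omega

lemma cast_two_mul_sub_one (n : ℕ) (hn : 1 ≤ n) : ((2*n-1 : ℕ):ℝ) = 2*(n:ℝ)-1 := by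
  push_cast [show 1 ≤ 2*n by omega]; ring
lemma mem_A_iff (m : ℕ) :
    (m ∈ Aset) ↔ ∃ n : ℕ, 1 ≤ n ∧ 4^n ≤ m ∧ m ≤ T n := by
  rw [Aset, Set.mem_setOf_eq]
  have key : ∀ n : ℕ, 1 ≤ n → ((n:ℝ) * ((2 - 1/(n:ℝ))*4^n) = (2*(n:ℝ)-1)*4^n) := by
    intro n hn
    have hne : (n:ℝ) ≠ 0 := Nat.cast_ne_zero.mpr (by omega)
    field_simp
  constructor <;> rintro ⟨n, hn, h1, h2⟩ <;> refine ⟨n, hn, h1, ?_⟩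
  · have hnpos : (0:ℝ) < n := by exact_mod_cast hn
    have h3 : ((n*m : ℕ):ℝ) < (((2*n-1)*4^n : ℕ):ℝ) := by
      push_cast [cast_two_mul_sub_one n hn]
      calc (n:ℝ)*m < (n:ℝ) * ((2 - 1/(n:ℝ))*4^n) := by
            exact mul_lt_mul_of_pos_left h2 hnpos
        _ = (2*(n:ℝ)-1)*4^n := key n hn
    have h4 : n * m < (2*n-1) * 4^n := by exact_mod_cast h3
    have ha : 0 < (2*n-1)*4^n := Nat.mul_pos (by omega) (four_pow_pos n)
    rw [T, Nat.le_div_iff_mul_le (by omega), mul_comm]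
    omega
  · have hnpos : (0:ℝ) < n := by exact_mod_cast hn
    have ha : 0 < (2*n-1)*4^n := Nat.mul_pos (by omega) (four_pow_pos n)
    have h4 : n * m < (2*n-1) * 4^n := by
      rw [T, Nat.le_div_iff_mul_le (by omega)] at h2
      rw [mul_comm]
      omega
    have h3 : ((n*m : ℕ):ℝ) < (((2*n-1)*4^n : ℕ):ℝ) := by exact_mod_cast h4
    push_cast [cast_two_mul_sub_one n hn] at h3
    rw [← key n hn] at h3
    exact lt_of_mul_lt_mul_left h3 (le_of_lt hnpos)


lemma T_lt_next (k : ℕ) (hk : 1 ≤ k) : T k < 4^(k+1) := by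
  have := T_le k hk
  have : 2*4^k ≤ 4^(k+1) := by ring_nf; omega
  omega

lemma T_mono {j k : ℕ} (hj : 1 ≤ j) (hjk : j ≤ k) : T j ≤ T k := by
  rcases eq_or_lt_of_le hjk with rfl | h
  · exact le_rfl
  · have h2 : 2 ≤ k := by omega
    exact le_of_lt (lt_of_lt_of_le (T_lt_next j hj)
      (le_trans (Nat.pow_le_pow_right (by norm_num) h) (T_ge k h2)))

lemma filter_eq (N : ℕ) :
    (Finset.Icc 1 N).filter (fun m => m ∈ Aset) =
    (Finset.Icc 1 (Nat.log 4 N)).biUnion (fun k => Finset.Icc (4^k) (min N (T k))) := by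
  ext m
  simp only [mem_filter, mem_biUnion, Finset.mem_Icc, le_min_iff, mem_A_iff,
    Nat.lt_iff_add_one_le]
  constructor
  · rintro ⟨⟨hm1, hmN⟩, k, hk, h4, hT⟩
    have hNne : N ≠ 0 := by have := four_pow_pos k; omega
    refine ⟨k, ⟨hk, ?_⟩, h4, hmN, hT⟩
    exact (Nat.le_log_iff_pow_le (by norm_num) hNne).mpr (le_trans h4 hmN)
  · rintro ⟨k, ⟨hk, _⟩, h4, hm⟩
    have := four_pow_pos k
    exact ⟨⟨by omega, hm.1⟩, k, hk, h4, hm.2⟩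

lemma count_eq (N : ℕ) :
    countIn Aset N = ∑ k ∈ Finset.Icc 1 (Nat.log 4 N), (min N (T k) + 1 - 4^k) := by
  rw [countIn]
  have : ((Finset.Icc 1 N).filter (fun m => m ∈ Aset)) =
      (Finset.Icc 1 (Nat.log 4 N)).biUnion (fun k => Finset.Icc (4^k) (min N (T k))) :=
    filter_eq N
  rw [this, Finset.card_biUnion]
  · exact Finset.sum_congr rfl (fun k _ => by rw [Nat.card_Icc])
  · intro j hj k hk hjk
    simp only [Finset.mem_coe, Finset.mem_Icc] at hj hk
    wlog h : j < k generalizing j k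
    · exact Disjoint.symm (this (Ne.symm hjk) hk hj (by omega))
    · rw [Function.onFun, Finset.disjoint_left]
      intro m hm1 hm2
      simp only [Finset.mem_Icc, le_min_iff] at hm1 hm2
      have h1 : m ≤ T j := hm1.2.2
      have h2 : 4^(j+1) ≤ 4^k := Nat.pow_le_pow_right (by norm_num) h
      have := T_lt_next j hj.1
      omega

lemma geom_nat (m : ℕ) : 3 * (∑ k ∈ Finset.Icc 1 m, 4^k) + 4 = 4^(m+1) := by
  induction m with
  | zero => simp
  | succ m ih =>
    rw [Finset.sum_Icc_succ_top (by omega), pow_succ 4 (m+1)]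
    omega

lemma count_ub (N : ℕ) : 3 * countIn Aset N ≤ 2 * N + 3 := by
  rcases lt_or_ge N 4 with h | h
  · have : Nat.log 4 N = 0 := Nat.log_eq_zero_iff.mpr (Or.inl h)
    rw [count_eq, this]
    simp
  · set n := Nat.log 4 N with hn
    have hn1 : 1 ≤ n := Nat.log_pos (by norm_num) h
    have h4N : 4^n ≤ N := Nat.pow_log_le_self 4 (by omega)
    rw [count_eq, ← hn]
    have hsplit : Finset.Icc 1 n = Finset.Icc 1 ((n-1)+1) := by congr 1; omega
    rw [hsplit, Finset.sum_Icc_succ_top (by omega)]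
    have hng : (n-1)+1 = n := by omega
    rw [hng]
    have hbound : ∑ k ∈ Finset.Icc 1 (n-1), (min N (T k) + 1 - 4^k) ≤
        ∑ k ∈ Finset.Icc 1 (n-1), 4^k := by
      apply Finset.sum_le_sum
      intro k hk
      simp only [Finset.mem_Icc] at hk
      have h1 := T_le k hk.1
      have h2 : min N (T k) ≤ T k := min_le_right _ _
      omega
    have hgeom := geom_nat (n-1)
    rw [hng] at hgeom
    have hTn := T_le n hn1
    have hminN : min N (T n) ≤ N := min_le_left _ _
    have hminT : min N (T n) ≤ T n := min_le_right _ _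
    have h44 : 4 ≤ 4^n := by calc 4 = 4^1 := rfl
                                _ ≤ 4^n := Nat.pow_le_pow_right (by norm_num) hn1
    omega


-- exact count at T n
lemma count_at_T (n : ℕ) (hn : 2 ≤ n) :
    countIn Aset (T n) = ∑ k ∈ Finset.Icc 1 n, (T k + 1 - 4^k) := by
  have hlog : Nat.log 4 (T n) = n := by
    apply Nat.log_eq_of_pow_le_of_lt_pow (T_ge n hn)
    have h1 := T_le n (by omega)
    have h2 : 2 * 4^n ≤ 4^(n+1) := by rw [pow_succ]; omega
    omega
  rw [count_eq, hlog]
  apply Finset.sum_congr rfl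
  intro k hk
  simp only [Finset.mem_Icc] at hk
  have : T k ≤ T n := T_mono hk.1 hk.2
  rw [min_eq_right this]

lemma T_add_one_ge (k : ℕ) (hk : 1 ≤ k) : 4^k ≤ T k + 1 := by
  have h := T_mul_lb k hk
  have h2 : k * 4^k ≤ (2*k-1) * 4^k := Nat.mul_le_mul_right _ (by omega)
  nlinarith

lemma two_mul_le_four_pow (k : ℕ) : 2*k ≤ 4^k := by
  have h : 2*k < 2^(2*k) := Nat.lt_two_pow_self
  have e : (4:ℕ)^k = 2^(2*k) := by rw [pow_mul]; norm_num
  omega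

lemma cast_term (k : ℕ) (hk : 1 ≤ k) :
    (1 - 1/(k:ℝ)) * 4^k ≤ ((T k + 1 - 4^k : ℕ) : ℝ) := by
  have hle := T_add_one_ge k hk
  rw [Nat.cast_sub hle]
  push_cast
  have h := T_mul_lb k hk
  have h' : ((2*k-1 : ℕ):ℝ) * 4^k ≤ ((T k : ℝ) + 1) * k := by exact_mod_cast h
  have hc : ((2*k-1 : ℕ):ℝ) = 2*(k:ℝ)-1 := by
    push_cast [show 1 ≤ 2*k by omega]; ring
  rw [hc] at h'
  have hkpos : (0:ℝ) < k := by exact_mod_cast hk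
  apply le_of_mul_le_mul_right _ hkpos
  have hne : (k:ℝ) ≠ 0 := ne_of_gt hkpos
  calc (1 - 1/(k:ℝ)) * 4^k * k = 4^k*k - 4^k := by field_simp
    _ ≤ ((T k:ℝ) + 1 - 4^k) * k := by nlinarith [h']

lemma geomR (n : ℕ) : ∑ k ∈ Finset.Icc 1 n, (4:ℝ)^k = (4^(n+1) - 4)/3 := by
  have h := geom_nat n
  have h2 : (3:ℝ) * (∑ k ∈ Finset.Icc 1 n, (4:ℝ)^k) + 4 = 4^(n+1) := by exact_mod_cast h
  linarith

lemma sumInv (n : ℕ) (hn : 1 ≤ n) :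
    ∑ k ∈ Finset.Icc 1 n, (4:ℝ)^k/k ≤ 2*4^n/n := by
  induction n, hn using Nat.le_induction with
  | base => norm_num
  | succ n hn ih =>
    rw [Finset.sum_Icc_succ_top (by omega)]
    have hnpos : (0:ℝ) < n := by exact_mod_cast hn
    have hn1pos : (0:ℝ) < (n:ℝ)+1 := by linarith
    have key : 2*(4:ℝ)^n/n ≤ 4^(n+1)/(n+1) := by
      have hn1 : (1:ℝ) ≤ n := by exact_mod_cast hn
      rw [div_le_div_iff₀ hnpos hn1pos, pow_succ]
      nlinarith [pow_pos (show (0:ℝ) < 4 by norm_num) n, hn1]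
    push_cast
    calc (∑ k ∈ Finset.Icc 1 n, (4:ℝ)^k/k) + 4^(n+1)/((n:ℝ)+1)
        ≤ 2*4^n/n + 4^(n+1)/((n:ℝ)+1) := by linarith
      _ ≤ 4^(n+1)/((n:ℝ)+1) + 4^(n+1)/((n:ℝ)+1) := by linarith
      _ = 2*4^(n+1)/((n:ℝ)+1) := by ring

lemma count_lb_real (n : ℕ) (hn : 2 ≤ n) :
    (4^(n+1) - 4)/3 - 2*4^n/(n:ℝ) ≤ (countIn Aset (T n) : ℝ) := by
  rw [count_at_T n hn]
  push_cast
  calc (4^(n+1) - 4)/3 - 2*4^n/(n:ℝ)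
      ≤ ∑ k ∈ Finset.Icc 1 n, ((4:ℝ)^k - 4^k/k) := by
        rw [Finset.sum_sub_distrib, geomR]
        have := sumInv n (by omega)
        linarith
    _ ≤ ∑ k ∈ Finset.Icc 1 n, ((T k + 1 - 4^k : ℕ) : ℝ) := by
        apply Finset.sum_le_sum
        intro k hk
        simp only [Finset.mem_Icc] at hk
        have := cast_term k hk.1
        have h2 : (4:ℝ)^k - 4^k/k = (1 - 1/(k:ℝ)) * 4^k := by ring
        rw [h2]
        exact this

lemma ratio_lb (n : ℕ) (hn : 2 ≤ n) :
    2/3 - 2/(n:ℝ) ≤ (countIn Aset (T n) : ℝ) / (T n : ℝ) := by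
  have hnpos : (0:ℝ) < n := by exact_mod_cast (by omega : 0 < n)
  have h4pos : (0:ℝ) < 4^n := by positivity
  have hn4 : (n:ℝ) ≤ 4^n := by exact_mod_cast le_four_pow n
  have hTpos : (0:ℝ) < (T n : ℝ) := by
    exact_mod_cast Nat.lt_of_lt_of_le (four_pow_pos n) (T_ge n hn)
  have hTub : (T n : ℝ) ≤ 2*4^n := by
    have := T_le n (by omega)
    have : ((T n + 1 : ℕ):ℝ) ≤ ((2*4^n : ℕ):ℝ) := by exact_mod_cast this
    push_cast at this
    linarith
  have hlb := count_lb_real n hn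
  have hn2 : (2:ℝ) ≤ n := by exact_mod_cast hn
  have h2n : 2*(n:ℝ) ≤ 4^n := by exact_mod_cast two_mul_le_four_pow n
  have hnum : 0 ≤ (4^(n+1) - 4)/3 - 2*4^n/(n:ℝ) := by
    rw [pow_succ]
    rw [sub_nonneg, div_le_div_iff₀ hnpos (by norm_num : (0:ℝ) < 3)]
    nlinarith [mul_nonneg (sub_nonneg.mpr hn2) (le_of_lt h4pos), h2n]
  calc 2/3 - 2/(n:ℝ) ≤ ((4^(n+1) - 4)/3 - 2*4^n/(n:ℝ)) / (2*4^n) := by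
        rw [le_div_iff₀ (by positivity : (0:ℝ) < 2*4^n), pow_succ]
        have e4 : (4:ℝ)/3 ≤ 2*4^n/(n:ℝ) := by
          rw [le_div_iff₀ hnpos]
          nlinarith [h2n]
        have e5 : ((4:ℝ)^n*4 - 4)/3 = 4*4^n/3 - 4/3 := by ring
        have e7 : (2/3 - 2/(n:ℝ)) * (2*4^n) = 4*4^n/3 - 2*(2*4^n/(n:ℝ)) := by ring
        linarith [e4, e7]
    _ ≤ (countIn Aset (T n) : ℝ) / (T n : ℝ) :=
        div_le_div₀ (Nat.cast_nonneg _) hlb hTpos hTub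


lemma count_le_self (N : ℕ) : countIn Aset N ≤ N := by
  calc countIn Aset N ≤ (Finset.Icc 1 N).card := Finset.card_filter_le _ _
    _ = N := by rw [Nat.card_Icc]; omega

lemma u_nonneg (N : ℕ) : 0 ≤ (countIn Aset N : ℝ) / N := by positivity

lemma u_le_one (N : ℕ) : (countIn Aset N : ℝ) / N ≤ 1 := by
  rcases Nat.eq_zero_or_pos N with rfl | h
  · simp
  · rw [div_le_one (by exact_mod_cast h)]
    exact_mod_cast count_le_self N

theorem upperDensity_example_two_thirds' :
    upperDensity {m : ℕ | ∃ n : ℕ, 1 ≤ n ∧ 4 ^ n ≤ m ∧ (m : ℝ) < (2 - 1 / n) * 4 ^ n}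
      = 2 / 3 := by
  have hset : {m : ℕ | ∃ n : ℕ, 1 ≤ n ∧ 4 ^ n ≤ m ∧ (m : ℝ) < (2 - 1 / n) * 4 ^ n} = Aset := rfl
  rw [hset, upperDensity]
  set u : ℕ → ℝ := fun N => (countIn Aset N : ℝ) / N with hu
  have hbdd : IsBoundedUnder (· ≤ ·) atTop u := isBoundedUnder_of ⟨1, u_le_one⟩
  have hcobdd : IsCoboundedUnder (· ≤ ·) atTop u :=
    isCoboundedUnder_le_of_le atTop u_nonneg
  apply le_antisymm
  · -- limsup ≤ 2/3
    apply le_of_forall_gt_imp_ge_of_dense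
    intro c hc
    apply limsup_le_of_le hcobdd
    obtain ⟨ε, hεpos, hεc⟩ : ∃ ε : ℝ, 0 < ε ∧ 2/3 + ε ≤ c := ⟨c - 2/3, by linarith, by linarith⟩
    rw [eventually_atTop]
    refine ⟨⌈1/ε⌉₊ + 1, fun N hN => ?_⟩
    have hN1 : 1 ≤ N := by omega
    have hNpos : (0:ℝ) < N := by exact_mod_cast hN1
    have hcount : (countIn Aset N : ℝ) ≤ (2*N + 3)/3 := by
      have := count_ub N
      have h3 : ((3 * countIn Aset N : ℕ):ℝ) ≤ ((2*N+3 : ℕ):ℝ) := by exact_mod_cast this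
      push_cast at h3
      linarith
    have hinv : 1 ≤ ε * N := by
      have h1 : 1/ε ≤ (⌈1/ε⌉₊ : ℝ) := Nat.le_ceil _
      have h2 : ((⌈1/ε⌉₊ : ℕ):ℝ) + 1 ≤ (N:ℝ) := by exact_mod_cast hN
      rw [div_le_iff₀ hεpos] at h1
      nlinarith [mul_le_mul_of_nonneg_left h2 (le_of_lt hεpos)]
    show (countIn Aset N : ℝ) / N ≤ c
    rw [div_le_iff₀ hNpos]
    have hcn : (2/3 + ε) * N ≤ c * N := mul_le_mul_of_nonneg_right hεc (le_of_lt hNpos)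
    nlinarith
  · -- 2/3 ≤ limsup
    by_contra h
    push_neg at h
    set L := limsup u atTop with hL
    have key : ∀ ε : ℝ, 0 < ε → 2/3 - ε ≤ L := by
      intro ε hεpos
      apply le_limsup_of_frequently_le _ hbdd
      rw [frequently_atTop]
      intro M
      set n := max (max M 2) ⌈2/ε⌉₊ with hn
      have hn2 : 2 ≤ n := le_trans (le_max_right M 2) (le_max_left _ _)
      have hnM : M ≤ n := le_trans (le_max_left M 2) (le_max_left _ _)
      have hnc : ⌈2/ε⌉₊ ≤ n := le_max_right _ _
      refine ⟨T n, ?_, ?_⟩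
      · calc M ≤ n := hnM
          _ ≤ 4^n := le_four_pow n
          _ ≤ T n := T_ge n hn2
      · have hratio := ratio_lb n hn2
        have hnpos : (0:ℝ) < n := by exact_mod_cast (by omega : 0 < n)
        have h2n : 2/(n:ℝ) ≤ ε := by
          rw [div_le_iff₀ hnpos]
          have h1 : 2/ε ≤ (⌈2/ε⌉₊ : ℝ) := Nat.le_ceil _
          have h2 : ((⌈2/ε⌉₊:ℕ):ℝ) ≤ (n:ℝ) := by exact_mod_cast hnc
          rw [div_le_iff₀ hεpos] at h1
          nlinarith [mul_le_mul_of_nonneg_left h2 (le_of_lt hεpos)]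
        calc 2/3 - ε ≤ 2/3 - 2/(n:ℝ) := by linarith
          _ ≤ u (T n) := hratio
    have := key ((2/3 - L)/2) (by linarith)
    linarith


end UD

theorem upperDensity_example_two_thirds :
    upperDensity {m : ℕ | ∃ n : ℕ, 1 ≤ n ∧ 4 ^ n ≤ m ∧ (m : ℝ) < (2 - 1 / n) * 4 ^ n}
      = 2 / 3 := UD.upperDensity_example_two_thirds'
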